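/- arXiv:alg-geom/9708016 — 3 statements merged into one kernel-verified Lean document; each statement's English description precedes it below -/
import Mathlib

section
/- Write τ ∈ ℍ_g in block form ((τ₁, ᵗτ₂),(τ₂, τ₃)) with τ₁ ∈ ℍ_{g-1}, τ₂ ∈ ℂ^{g-1} a row vector, and τ₃ ∈ ℂ. For γ = ((A,B),(C,D)) ∈ Sp(2(g-1),ℤ), the action of the embedded matrix g₁ = ((A,0,B,0),(0,1,0,0),(C,0,D,0),(0,0,0,1)) on τ has lower-right entry equal to τ₃ - τ₂(Cτ₁+D)^{-1} C ᵗτ₂ and lower-left block equal to τ₂(Cτ₁+D)^{-1}. -/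
open Matrix

/-- The Siegel upper half space `ℍ_g`. -/
def SiegelUpperHalfSpace (g : ℕ) : Set (Matrix (Fin g) (Fin g) ℂ) :=
  {τ | τ.IsSymm ∧ (Matrix.of fun i j => (τ i j).im).PosDef}

/-- The action `γ(τ) = (Aτ+B)(Cτ+D)⁻¹`. -/
noncomputable def siegelAct {g : ℕ} (γ : Matrix (Fin g ⊕ Fin g) (Fin g ⊕ Fin g) ℝ)
    (τ : Matrix (Fin g) (Fin g) ℂ) : Matrix (Fin g) (Fin g) ℂ :=
  (γ.toBlocks₁₁.map (Complex.ofReal) * τ + γ.toBlocks₁₂.map (Complex.ofReal)) *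
    (γ.toBlocks₂₁.map (Complex.ofReal) * τ + γ.toBlocks₂₂.map (Complex.ofReal))⁻¹

/-- View an index of `Fin (k+1)` as an index of `Fin k` if possible. -/
def liftIdx {k : ℕ} (i : Fin (k + 1) ⊕ Fin (k + 1)) : Option (Fin k ⊕ Fin k) :=
  Sum.elim
    (fun a : Fin (k + 1) => if h : (a : ℕ) < k then some (Sum.inl ⟨a, h⟩) else none)
    (fun b : Fin (k + 1) => if h : (b : ℕ) < k then some (Sum.inr ⟨b, h⟩) else none) i

/-- The embedding `((A,B),(C,D)) ↦ ((A,0,B,0),(0,1,0,0),(C,0,D,0),(0,0,0,1))` of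
`2k × 2k` matrices into `2(k+1) × 2(k+1)` matrices. -/
def gOne (k : ℕ) (M : Matrix (Fin k ⊕ Fin k) (Fin k ⊕ Fin k) ℤ) :
    Matrix (Fin (k + 1) ⊕ Fin (k + 1)) (Fin (k + 1) ⊕ Fin (k + 1)) ℤ :=
  Matrix.of fun i j =>
    match liftIdx i, liftIdx j with
    | some i', some j' => M i' j'
    | _, _ => if i = j then 1 else 0

variable {k : ℕ}

lemma liftIdx_map (i : Fin k ⊕ Fin k) :
    liftIdx (Sum.map Fin.castSucc Fin.castSucc i) = some i := by
  cases i with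
  | inl a => simp [liftIdx, a.isLt, Fin.castSucc]
  | inr a => simp [liftIdx, a.isLt, Fin.castSucc]

lemma liftIdx_inl_last : liftIdx (Sum.inl (Fin.last k)) = none := by
  simp [liftIdx]

lemma liftIdx_inr_last : liftIdx (Sum.inr (Fin.last k)) = none := by
  simp [liftIdx]

lemma gOne_small (M : Matrix (Fin k ⊕ Fin k) (Fin k ⊕ Fin k) ℤ) (i j : Fin k ⊕ Fin k) :
    gOne k M (Sum.map Fin.castSucc Fin.castSucc i) (Sum.map Fin.castSucc Fin.castSucc j)
      = M i j := by
  simp [gOne, liftIdx_map]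

lemma gOne_last_left (M : Matrix (Fin k ⊕ Fin k) (Fin k ⊕ Fin k) ℤ)
    (i j : Fin (k+1) ⊕ Fin (k+1)) (hi : liftIdx i = none) :
    gOne k M i j = if i = j then 1 else 0 := by
  rcases h : liftIdx j with _ | j' <;> simp [gOne, hi, h]

lemma gOne_last_right (M : Matrix (Fin k ⊕ Fin k) (Fin k ⊕ Fin k) ℤ)
    (i j : Fin (k+1) ⊕ Fin (k+1)) (hj : liftIdx j = none) :
    gOne k M i j = if i = j then 1 else 0 := by
  rcases h : liftIdx i with _ | i' <;> simp [gOne, hj, h]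

lemma re_quad (Y : Matrix (Fin k) (Fin k) ℝ) (y : Fin k → ℂ) :
    (star y ⬝ᵥ (Y.map (Complex.ofReal)) *ᵥ y).re
      = (fun i => (y i).re) ⬝ᵥ Y *ᵥ (fun i => (y i).re)
        + (fun i => (y i).im) ⬝ᵥ Y *ᵥ (fun i => (y i).im) := by
  simp only [dotProduct, mulVec, map_apply, Pi.star_apply, Finset.mul_sum, Complex.re_sum,
    ← Finset.sum_add_distrib]
  refine Finset.sum_congr rfl fun i _ => Finset.sum_congr rfl fun j _ => ?_
  simp [Complex.mul_re, Complex.mul_im]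

lemma isUnit_CD_det (A B C D τ₁ : Matrix (Fin k) (Fin k) ℂ)
    (hC : C.map (starRingEnd ℂ) = C) (hD : D.map (starRingEnd ℂ) = D)
    (hsym : τ₁ᵀ = τ₁)
    (h1 : Aᵀ * C = Cᵀ * A) (h2 : Bᵀ * D = Dᵀ * B) (h3 : Aᵀ * D - Cᵀ * B = 1)
    (hpos : ∀ u : Fin k → ℝ, u ≠ 0 →
      0 < u ⬝ᵥ (Matrix.of fun i j => (τ₁ i j).im) *ᵥ u) :
    IsUnit (C * τ₁ + D).det := by
  rw [isUnit_iff_ne_zero]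
  intro hdet
  obtain ⟨x, hx0, hxe⟩ := (Matrix.exists_mulVec_eq_zero_iff).mpr hdet
  set τb := τ₁.map (starRingEnd ℂ) with hτb
  have h3b : Dᵀ * A - Bᵀ * C = 1 := by
    have := congrArg Matrix.transpose h3
    simpa [transpose_sub, transpose_mul, Matrix.transpose_one] using this
  have h3a : Cᵀ * B = Aᵀ * D - 1 := by rw [← h3]; noncomm_ring
  have h3b' : Bᵀ * C = Dᵀ * A - 1 := by rw [← h3b]; noncomm_ring
  have e1 : (τ₁*Cᵀ+Dᵀ) * (A*τb+B)
      = τ₁*(Cᵀ*A)*τb + τ₁*(Cᵀ*B) + (Dᵀ*A)*τb + Dᵀ*B := by noncomm_ring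
  have e2 : (τ₁*Aᵀ+Bᵀ) * (C*τb+D)
      = τ₁*(Aᵀ*C)*τb + τ₁*(Aᵀ*D) + (Bᵀ*C)*τb + Bᵀ*D := by noncomm_ring
  have key : (C*τ₁+D)ᵀ * (A*τb+B) - (A*τ₁+B)ᵀ * (C*τb+D) = τb - τ₁ := by
    simp only [transpose_add, transpose_mul, hsym]
    rw [e1, e2, h1, h2, h3a, h3b']
    noncomm_ring
  have hconjM : (C * τb + D) *ᵥ (star x) = 0 := by
    have hCe : ∀ i j, (starRingEnd ℂ) (C i j) = C i j := fun i j => by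
      conv_rhs => rw [← hC]
      simp [Matrix.map_apply]
    have hDe : ∀ i j, (starRingEnd ℂ) (D i j) = D i j := fun i j => by
      conv_rhs => rw [← hD]
      simp [Matrix.map_apply]
    have hmap : C * τb + D = (C * τ₁ + D).map (starRingEnd ℂ) := by
      ext i j
      simp [hτb, Matrix.map_apply, Matrix.mul_apply, Matrix.add_apply, map_sum,
        _root_.map_mul, hCe, hDe]
    rw [hmap]
    have : (C * τ₁ + D).map (starRingEnd ℂ) *ᵥ star x = star ((C * τ₁ + D) *ᵥ x) := by
      funext i
      simp only [mulVec, dotProduct, Matrix.map_apply, Pi.star_apply, Complex.star_def, map_sum]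
      exact Finset.sum_congr rfl fun j _ => (map_mul (starRingEnd ℂ) _ _).symm
    rw [this, hxe]
    simp
  have main : x ⬝ᵥ ((τb - τ₁) *ᵥ star x) = 0 := by
    rw [← key, Matrix.sub_mulVec, dotProduct_sub, ← Matrix.mulVec_mulVec, ← Matrix.mulVec_mulVec,
      hconjM, Matrix.mulVec_zero, dotProduct_zero, Matrix.dotProduct_mulVec x,
      Matrix.vecMul_transpose, hxe, zero_dotProduct, sub_zero]
  set Y : Matrix (Fin k) (Fin k) ℝ := Matrix.of fun i j => (τ₁ i j).im with hY
  have hdiff : τb - τ₁ = (-(2:ℂ)*Complex.I) • (Y.map Complex.ofReal) := by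
    ext i j
    simp only [hτb, Matrix.sub_apply, Matrix.map_apply, Matrix.smul_apply, hY, Matrix.of_apply,
      smul_eq_mul]
    apply Complex.ext <;> simp [Complex.conj_re, Complex.conj_im] <;> ring
  rw [hdiff, smul_mulVec, dotProduct_smul, smul_eq_mul, mul_eq_zero] at main
  have hI : (-(2:ℂ)*Complex.I) ≠ 0 := by simp [Complex.I_ne_zero]
  have main2 : x ⬝ᵥ (Y.map Complex.ofReal) *ᵥ star x = 0 := main.resolve_left hI
  have hre := re_quad Y (star x)
  rw [star_star, main2] at hre
  set u : Fin k → ℝ := fun i => ((star x : Fin k → ℂ) i).re with hu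
  set v : Fin k → ℝ := fun i => ((star x : Fin k → ℂ) i).im with hv
  have huv : u ≠ 0 ∨ v ≠ 0 := by
    by_contra hcon
    push_neg at hcon
    apply hx0
    funext i
    have h1' := congrFun hcon.1 i
    have h2' := congrFun hcon.2 i
    simp only [hu, hv, Pi.zero_apply, Pi.star_apply] at h1' h2'
    have : star (x i) = 0 := Complex.ext h1' h2'
    simpa using congrArg star this
  have hnonneg : ∀ w : Fin k → ℝ, 0 ≤ w ⬝ᵥ (Matrix.of fun i j => (τ₁ i j).im) *ᵥ w := by
    intro w
    by_cases hw : w = 0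
    · simp [hw]
    · exact (hpos w hw).le
  have : 0 < u ⬝ᵥ Y *ᵥ u + v ⬝ᵥ Y *ᵥ v := by
    rcases huv with h | h
    · exact add_pos_of_pos_of_nonneg (hpos u h) (hnonneg v)
    · exact add_pos_of_nonneg_of_pos (hnonneg u) (hpos v h)
  rw [← hre] at this
  simp at this

/-- Writing `τ ∈ ℍ_{k+1}` in block form `((τ₁, ᵗτ₂),(τ₂, τ₃))`, the action of the
embedded matrix `g₁` of `γ = ((A,B),(C,D)) ∈ Sp(2k,ℤ)` has lower-right entry
`τ₃ - τ₂(Cτ₁+D)⁻¹Cᵗτ₂` and lower-left row `τ₂(Cτ₁+D)⁻¹`. -/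
theorem gOne_action_blocks (k : ℕ) (γ : Matrix (Fin k ⊕ Fin k) (Fin k ⊕ Fin k) ℤ)
    (hγ : γ ∈ Matrix.symplecticGroup (Fin k) ℤ)
    (τ : Matrix (Fin (k + 1)) (Fin (k + 1)) ℂ)
    (hτ : τ ∈ SiegelUpperHalfSpace (k + 1)) :
    let τ₁ : Matrix (Fin k) (Fin k) ℂ := τ.submatrix Fin.castSucc Fin.castSucc
    let τ₂ : Fin k → ℂ := fun b => τ (Fin.last k) (Fin.castSucc b)
    let Cc : Matrix (Fin k) (Fin k) ℂ := γ.toBlocks₂₁.map (fun x : ℤ => (x : ℂ))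
    let Dc : Matrix (Fin k) (Fin k) ℂ := γ.toBlocks₂₂.map (fun x : ℤ => (x : ℂ))
    let v : Fin k → ℂ := Matrix.vecMul τ₂ (Cc * τ₁ + Dc)⁻¹
    let στ := siegelAct ((gOne k γ).map (fun x : ℤ => (x : ℝ))) τ
    (στ (Fin.last k) (Fin.last k) =
        τ (Fin.last k) (Fin.last k) - (Matrix.vecMul v Cc) ⬝ᵥ τ₂) ∧
    (∀ b : Fin k, στ (Fin.last k) (Fin.castSucc b) = v b) := by
  intro τ₁ τ₂ Cc Dc v στ
  obtain ⟨hsymm, hpos'⟩ := hτ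
  -- complex blocks
  set Ac : Matrix (Fin k) (Fin k) ℂ := γ.toBlocks₁₁.map (fun x : ℤ => (x : ℂ)) with hAc
  set Bc : Matrix (Fin k) (Fin k) ℂ := γ.toBlocks₁₂.map (fun x : ℤ => (x : ℂ)) with hBc
  -- symplectic relations over ℤ
  have hJ := SymplecticGroup.mem_iff'.mp hγ
  rw [Matrix.J, ← Matrix.fromBlocks_toBlocks γ, fromBlocks_transpose, fromBlocks_multiply,
    fromBlocks_multiply] at hJ
  have hz1 : γ.toBlocks₁₁ᵀ * γ.toBlocks₂₁ = γ.toBlocks₂₁ᵀ * γ.toBlocks₁₁ := by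
    have := congrArg Matrix.toBlocks₁₁ hJ
    simp only [Matrix.toBlocks_fromBlocks₁₁] at this
    simp only [Matrix.mul_zero, Matrix.mul_one, Matrix.mul_neg, Matrix.zero_mul, Matrix.one_mul,
      zero_add, add_zero, Matrix.neg_mul] at this
    rw [add_neg_eq_zero] at this
    exact this.symm
  have hz2 : γ.toBlocks₁₂ᵀ * γ.toBlocks₂₂ = γ.toBlocks₂₂ᵀ * γ.toBlocks₁₂ := by
    have := congrArg Matrix.toBlocks₂₂ hJ
    simp only [Matrix.toBlocks_fromBlocks₂₂] at this
    simp only [Matrix.mul_zero, Matrix.mul_one, Matrix.mul_neg, Matrix.zero_mul, Matrix.one_mul,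
      zero_add, add_zero, Matrix.neg_mul] at this
    rw [add_neg_eq_zero] at this
    exact this.symm
  have hz3 : γ.toBlocks₁₁ᵀ * γ.toBlocks₂₂ - γ.toBlocks₂₁ᵀ * γ.toBlocks₁₂ = 1 := by
    have := congrArg Matrix.toBlocks₁₂ hJ
    simp only [Matrix.toBlocks_fromBlocks₁₂] at this
    simp only [Matrix.mul_zero, Matrix.mul_one, Matrix.mul_neg, Matrix.zero_mul, Matrix.one_mul,
      zero_add, add_zero, Matrix.neg_mul] at this
    rw [show (1 : Matrix (Fin k) (Fin k) ℤ) = -(-1) by simp, ← this]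
    abel
  -- transfer to ℂ via ring hom
  have φeq : ∀ M : Matrix (Fin k) (Fin k) ℤ,
      (Int.castRingHom ℂ).mapMatrix M = M.map (fun x : ℤ => (x : ℂ)) := fun M => rfl
  have hmapT : ∀ M : Matrix (Fin k) (Fin k) ℤ,
      (M.map (fun x : ℤ => (x : ℂ)))ᵀ = Mᵀ.map (fun x : ℤ => (x : ℂ)) := fun M => rfl
  have h1c : Acᵀ * Cc = Ccᵀ * Ac := by
    have := congrArg (RingHom.mapMatrix (Int.castRingHom ℂ)) hz1
    simp only [_root_.map_mul] at this
    simp only [φeq] at this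
    rw [hAc, hmapT, hmapT]
    exact this
  have h2c : Bcᵀ * Dc = Dcᵀ * Bc := by
    have := congrArg (RingHom.mapMatrix (Int.castRingHom ℂ)) hz2
    simp only [_root_.map_mul] at this
    simp only [φeq] at this
    rw [hBc, hmapT, hmapT]
    exact this
  have h3c : Acᵀ * Dc - Ccᵀ * Bc = 1 := by
    have := congrArg (RingHom.mapMatrix (Int.castRingHom ℂ)) hz3
    simp only [map_sub, _root_.map_mul, _root_.map_one] at this
    simp only [φeq] at this
    rw [hAc, hBc, hmapT, hmapT]
    exact this
  -- symmetry of τ₁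
  have hsymτ₁ : τ₁ᵀ = τ₁ := by
    ext i j
    exact hsymm.apply (Fin.castSucc i) (Fin.castSucc j)
  have hτsym : ∀ i j, τ j i = τ i j := fun i j => hsymm.apply i j
  -- positivity of the submatrix
  have hpos : ∀ u : Fin k → ℝ, u ≠ 0 →
      0 < u ⬝ᵥ (Matrix.of fun i j => (τ₁ i j).im) *ᵥ u := by
    intro u hu
    set u' : Fin (k+1) → ℝ := Fin.snoc u 0 with hu'
    have hu'0 : u' ≠ 0 := by
      obtain ⟨i, hi⟩ := Function.ne_iff.mp hu
      exact Function.ne_iff.mpr ⟨Fin.castSucc i, by simpa [hu', Fin.snoc_castSucc] using hi⟩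
    have := hpos'.dotProduct_mulVec_pos hu'0
    rw [show star u' = u' from star_trivial u'] at this
    convert this using 1
    · exact rfl
    simp only [dotProduct, mulVec, Matrix.of_apply, Fin.sum_univ_castSucc, hu',
      Fin.snoc_castSucc, Fin.snoc_last, zero_mul, mul_zero, add_zero, zero_add]
    rfl
  have hdet : IsUnit (Cc * τ₁ + Dc).det := by
    refine isUnit_CD_det Ac Bc Cc Dc τ₁ ?_ ?_ hsymτ₁ h1c h2c h3c hpos
    · rw [show Cc = γ.toBlocks₂₁.map (fun x : ℤ => (x : ℂ)) from rfl]
      ext i j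
      simp [Matrix.map_apply, map_intCast]
    · rw [show Dc = γ.toBlocks₂₂.map (fun x : ℤ => (x : ℂ)) from rfl]
      ext i j
      simp [Matrix.map_apply, map_intCast]
  have hEunit : IsUnit (Cc * τ₁ + Dc) := (Matrix.isUnit_iff_isUnit_det _).mpr hdet
  -- the index equivalence
  set e : (Fin k ⊕ Fin 1) ≃ Fin (k + 1) := finSumFinEquiv with he
  have hesc : ∀ a : Fin k, e.symm (Fin.castSucc a) = Sum.inl a := by
    intro a
    rw [Equiv.symm_apply_eq]
    rfl
  have hesl : e.symm (Fin.last k) = Sum.inr 0 := by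
    rw [Equiv.symm_apply_eq]
    ext
    simp [he]
  set E : Matrix (Fin k) (Fin k) ℂ := Cc * τ₁ + Dc with hE
  set w : Matrix (Fin k) (Fin 1) ℂ := Matrix.of (fun i (_ : Fin 1) => (Cc *ᵥ τ₂) i) with hw
  set G : Matrix (Fin (k+1) ⊕ Fin (k+1)) (Fin (k+1) ⊕ Fin (k+1)) ℝ :=
    (gOne k γ).map (fun x : ℤ => (x : ℝ)) with hG
  -- entries of the four complex blocks of G
  have hC'ss : ∀ (a b : Fin k),
      (G.toBlocks₂₁.map Complex.ofReal) (Fin.castSucc a) (Fin.castSucc b) = Cc a b := by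
    intro a b
    have hg := gOne_small γ (Sum.inr a) (Sum.inl b)
    simp only [Sum.map_inr, Sum.map_inl] at hg
    simp [hG, Matrix.toBlocks₂₁, Matrix.map_apply, hg,
      show Cc = γ.toBlocks₂₁.map (fun x : ℤ => (x : ℂ)) from rfl, Matrix.toBlocks₂₁]
  have hC'sl : ∀ (a : Fin k),
      (G.toBlocks₂₁.map Complex.ofReal) (Fin.castSucc a) (Fin.last k) = 0 := by
    intro a
    have hg := gOne_last_right γ (Sum.inr a.castSucc) (Sum.inl (Fin.last k)) liftIdx_inl_last
    simp [hG, Matrix.toBlocks₂₁, Matrix.map_apply, hg]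
  have hC'l : ∀ (m : Fin (k+1)),
      (G.toBlocks₂₁.map Complex.ofReal) (Fin.last k) m = 0 := by
    intro m
    have hg := gOne_last_left γ (Sum.inr (Fin.last k)) (Sum.inl m) liftIdx_inr_last
    simp [hG, Matrix.toBlocks₂₁, Matrix.map_apply, hg]
  have hD'ss : ∀ (a b : Fin k),
      (G.toBlocks₂₂.map Complex.ofReal) (Fin.castSucc a) (Fin.castSucc b) = Dc a b := by
    intro a b
    have hg := gOne_small γ (Sum.inr a) (Sum.inr b)
    simp only [Sum.map_inr] at hg
    simp [hG, Matrix.toBlocks₂₂, Matrix.map_apply, hg,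
      show Dc = γ.toBlocks₂₂.map (fun x : ℤ => (x : ℂ)) from rfl, Matrix.toBlocks₂₂]
  have hD'sl : ∀ (a : Fin k),
      (G.toBlocks₂₂.map Complex.ofReal) (Fin.castSucc a) (Fin.last k) = 0 := by
    intro a
    have hg := gOne_last_right γ (Sum.inr a.castSucc) (Sum.inr (Fin.last k)) liftIdx_inr_last
    rw [if_neg (by simp [(Fin.castSucc_lt_last a).ne])] at hg
    simp [hG, Matrix.toBlocks₂₂, Matrix.map_apply, hg]
  have hD'ls : ∀ (b : Fin k),
      (G.toBlocks₂₂.map Complex.ofReal) (Fin.last k) (Fin.castSucc b) = 0 := by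
    intro b
    have hg := gOne_last_left γ (Sum.inr (Fin.last k)) (Sum.inr b.castSucc) liftIdx_inr_last
    rw [if_neg (by simp [(Fin.castSucc_lt_last b).ne'])] at hg
    simp [hG, Matrix.toBlocks₂₂, Matrix.map_apply, hg]
  have hD'll : (G.toBlocks₂₂.map Complex.ofReal) (Fin.last k) (Fin.last k) = 1 := by
    have hg := gOne_last_left γ (Sum.inr (Fin.last k)) (Sum.inr (Fin.last k)) liftIdx_inr_last
    rw [if_pos rfl] at hg
    simp [hG, Matrix.toBlocks₂₂, Matrix.map_apply, hg]
  have hA'ls : ∀ (b : Fin k),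
      (G.toBlocks₁₁.map Complex.ofReal) (Fin.last k) (Fin.castSucc b) = 0 := by
    intro b
    have hg := gOne_last_left γ (Sum.inl (Fin.last k)) (Sum.inl b.castSucc) liftIdx_inl_last
    rw [if_neg (by simp [(Fin.castSucc_lt_last b).ne'])] at hg
    simp [hG, Matrix.toBlocks₁₁, Matrix.map_apply, hg]
  have hA'll : (G.toBlocks₁₁.map Complex.ofReal) (Fin.last k) (Fin.last k) = 1 := by
    have hg := gOne_last_left γ (Sum.inl (Fin.last k)) (Sum.inl (Fin.last k)) liftIdx_inl_last
    rw [if_pos rfl] at hg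
    simp [hG, Matrix.toBlocks₁₁, Matrix.map_apply, hg]
  have hB'l : ∀ (m : Fin (k+1)),
      (G.toBlocks₁₂.map Complex.ofReal) (Fin.last k) m = 0 := by
    intro m
    have hg := gOne_last_left γ (Sum.inl (Fin.last k)) (Sum.inr m) liftIdx_inl_last
    simp [hG, Matrix.toBlocks₁₂, Matrix.map_apply, hg]
  -- the denominator is block upper triangular
  have hden : G.toBlocks₂₁.map Complex.ofReal * τ + G.toBlocks₂₂.map Complex.ofReal
      = (fromBlocks E w 0 1).submatrix e.symm e.symm := by
    ext i j
    refine Fin.lastCases ?_ (fun a => ?_) i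
    · refine Fin.lastCases ?_ (fun b => ?_) j
      · rw [Matrix.add_apply, Matrix.mul_apply, Matrix.submatrix_apply, hesl,
          Matrix.fromBlocks_apply₂₂]
        simp only [hC'l, zero_mul, Finset.sum_const_zero, hD'll, zero_add, Matrix.one_apply_eq]
      · rw [Matrix.add_apply, Matrix.mul_apply, Matrix.submatrix_apply, hesl, hesc,
          Matrix.fromBlocks_apply₂₁]
        simp only [hC'l, zero_mul, Finset.sum_const_zero, hD'ls, zero_add, Matrix.zero_apply]
    · refine Fin.lastCases ?_ (fun b => ?_) j
      · rw [Matrix.add_apply, Matrix.mul_apply, Matrix.submatrix_apply, hesl, hesc,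
          Matrix.fromBlocks_apply₁₂, Fin.sum_univ_castSucc]
        simp only [hC'ss, hC'sl, hD'sl, zero_mul, add_zero, mul_zero]
        rw [hw]
        simp only [Matrix.of_apply, Matrix.mulVec, dotProduct]
        refine Finset.sum_congr rfl fun m _ => ?_
        exact congrArg (fun z => Cc a m * z) (hτsym (Fin.last k) (Fin.castSucc m))
      · rw [Matrix.add_apply, Matrix.mul_apply, Matrix.submatrix_apply, hesc, hesc,
          Matrix.fromBlocks_apply₁₁, Fin.sum_univ_castSucc]
        simp only [hC'ss, hC'sl, hD'ss, zero_mul, add_zero]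
        rw [hE, Matrix.add_apply, Matrix.mul_apply]
        exact congrArg₂ (· + ·) (Finset.sum_congr rfl fun m _ => rfl) rfl
  -- the inverse of the denominator
  have hIunit : IsUnit E ↔ IsUnit (1 : Matrix (Fin 1) (Fin 1) ℂ) :=
    iff_of_true hEunit isUnit_one
  have hinv : (fromBlocks E w (0 : Matrix (Fin 1) (Fin k) ℂ) 1)⁻¹
      = fromBlocks E⁻¹ (-(E⁻¹ * w)) (0 : Matrix (Fin 1) (Fin k) ℂ) 1 := by
    rw [Matrix.inv_fromBlocks_zero₂₁_of_isUnit_iff E w (1 : Matrix (Fin 1) (Fin 1) ℂ) hIunit]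
    simp
  -- the numerator's last row
  have hnum : ∀ m : Fin (k+1),
      (G.toBlocks₁₁.map Complex.ofReal * τ + G.toBlocks₁₂.map Complex.ofReal) (Fin.last k) m
        = τ (Fin.last k) m := by
    intro m
    rw [Matrix.add_apply, Matrix.mul_apply, Fin.sum_univ_castSucc]
    simp only [hA'ls, hA'll, hB'l, zero_mul, Finset.sum_const_zero, zero_add, add_zero, one_mul]
  -- main computation
  have hstep : ∀ j, στ (Fin.last k) j
      = ∑ m : Fin (k+1), τ (Fin.last k) m *
          ((fromBlocks E⁻¹ (-(E⁻¹ * w)) 0 1).submatrix e.symm e.symm) m j := by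
    intro j
    show (siegelAct G τ) (Fin.last k) j = _
    rw [siegelAct, hden, Matrix.inv_submatrix_equiv, hinv]
    rw [Matrix.mul_apply]
    exact Finset.sum_congr rfl fun m _ => by rw [hnum]
  constructor
  · rw [hstep (Fin.last k), Fin.sum_univ_castSucc]
    simp only [Matrix.submatrix_apply, hesl, hesc, Matrix.fromBlocks_apply₁₂,
      Matrix.fromBlocks_apply₂₂, Matrix.one_apply_eq, mul_one, Matrix.neg_apply]
    have hterm : ∀ m : Fin k, (E⁻¹ * w) m 0 = (E⁻¹ *ᵥ (Cc *ᵥ τ₂)) m := by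
      intro m
      rw [Matrix.mul_apply, hw]
      simp [Matrix.mulVec, dotProduct]
    have : ∑ m : Fin k, τ (Fin.last k) (Fin.castSucc m) * -((E⁻¹ * w) m 0)
        = -(τ₂ ⬝ᵥ (E⁻¹ *ᵥ (Cc *ᵥ τ₂))) := by
      rw [dotProduct, ← Finset.sum_neg_distrib]
      exact Finset.sum_congr rfl fun m _ => by rw [hterm m]; ring
    rw [this, Matrix.dotProduct_mulVec, Matrix.dotProduct_mulVec]
    show _ = τ (Fin.last k) (Fin.last k) - ((τ₂ ᵥ* E⁻¹) ᵥ* Cc) ⬝ᵥ τ₂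
    ring
  · intro b
    rw [hstep (Fin.castSucc b), Fin.sum_univ_castSucc]
    simp only [Matrix.submatrix_apply, hesl, hesc, Matrix.fromBlocks_apply₁₁,
      Matrix.fromBlocks_apply₂₁, Matrix.zero_apply, mul_zero, add_zero]
    show _ = (τ₂ ᵥ* E⁻¹) b
    rw [Matrix.vecMul, dotProduct]
end

section
/- The six matrices α₁, α₂, α₃, β₁, β₂, β₃ ∈ Sym₃(ℤ), where α_i = E_{ii} and β₁ = ((0,0,0),(0,1,-1),(0,-1,1)), β₂ = ((1,0,-1),(0,0,0),(-1,0,1)), β₃ = ((1,-1,0),(-1,1,0),(0,0,0)), form a basis of the rank-6 lattice Sym₃(ℤ) of symmetric 3×3 integer matrices, and each of them is positive semidefinite. -/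
open Matrix

def alpha1 : Matrix (Fin 3) (Fin 3) ℤ := !![1, 0, 0; 0, 0, 0; 0, 0, 0]
def alpha2 : Matrix (Fin 3) (Fin 3) ℤ := !![0, 0, 0; 0, 1, 0; 0, 0, 0]
def alpha3 : Matrix (Fin 3) (Fin 3) ℤ := !![0, 0, 0; 0, 0, 0; 0, 0, 1]
def beta1 : Matrix (Fin 3) (Fin 3) ℤ := !![0, 0, 0; 0, 1, -1; 0, -1, 1]
def beta2 : Matrix (Fin 3) (Fin 3) ℤ := !![1, 0, -1; 0, 0, 0; -1, 0, 1]
def beta3 : Matrix (Fin 3) (Fin 3) ℤ := !![1, -1, 0; -1, 1, 0; 0, 0, 0]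

private lemma cv0 (v : Fin 6 → ℤ) : Matrix.vecCons (v 0) ![v 1, v 2, v 3, v 4, v 5] 0 = v 0 := rfl
private lemma vv0 (a b c d e f : ℤ) : ![a,b,c,d,e,f] 0 = a := rfl
private lemma vv1 (a b c d e f : ℤ) : ![a,b,c,d,e,f] 1 = b := rfl
private lemma vv2 (a b c d e f : ℤ) : ![a,b,c,d,e,f] 2 = c := rfl
private lemma vv3 (a b c d e f : ℤ) : ![a,b,c,d,e,f] 3 = d := rfl
private lemma vv4 (a b c d e f : ℤ) : ![a,b,c,d,e,f] 4 = e := rfl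
private lemma vv5 (a b c d e f : ℤ) : ![a,b,c,d,e,f] 5 = f := rfl

set_option maxHeartbeats 1600000 in
/-- `α₁, α₂, α₃, β₁, β₂, β₃` form a `ℤ`-basis of the rank-6 lattice `Sym₃(ℤ)` of
symmetric integer `3×3` matrices, and each of them is positive semidefinite. -/
theorem voronoi_generators_genus_three :
    (∀ A : Matrix (Fin 3) (Fin 3) ℤ, A.IsSymm →
      ∃! c : Fin 6 → ℤ, A = c 0 • alpha1 + c 1 • alpha2 + c 2 • alpha3 +
        c 3 • beta1 + c 4 • beta2 + c 5 • beta3) ∧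
    ((alpha1.map (Int.cast : ℤ → ℝ)).PosSemidef ∧
      (alpha2.map (Int.cast : ℤ → ℝ)).PosSemidef ∧
      (alpha3.map (Int.cast : ℤ → ℝ)).PosSemidef ∧
      (beta1.map (Int.cast : ℤ → ℝ)).PosSemidef ∧
      (beta2.map (Int.cast : ℤ → ℝ)).PosSemidef ∧
      (beta3.map (Int.cast : ℤ → ℝ)).PosSemidef) := by
  constructor
  · intro A hA
    have h01 : A 1 0 = A 0 1 := by
      have := congrFun (congrFun hA 0) 1; simpa [Matrix.IsSymm, Matrix.transpose] using this
    have h02 : A 2 0 = A 0 2 := by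
      have := congrFun (congrFun hA 0) 2; simpa [Matrix.IsSymm, Matrix.transpose] using this
    have h12 : A 2 1 = A 1 2 := by
      have := congrFun (congrFun hA 1) 2; simpa [Matrix.IsSymm, Matrix.transpose] using this
    refine ⟨![A 0 0 + A 0 1 + A 0 2, A 1 1 + A 0 1 + A 1 2, A 2 2 + A 0 2 + A 1 2,
      -A 1 2, -A 0 2, -A 0 1], ?_, ?_⟩
    · ext i j
      fin_cases i <;> fin_cases j <;>
        simp [alpha1, alpha2, alpha3, beta1, beta2, beta3, Matrix.vecHead, Matrix.vecTail, Function.comp,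
          vv0, vv1, vv2, vv3, vv4, vv5, h01, h02, h12] <;> ring
    · intro c hc
      have e : ∀ i j : Fin 3, A i j = (c 0 • alpha1 + c 1 • alpha2 + c 2 • alpha3 +
          c 3 • beta1 + c 4 • beta2 + c 5 • beta3) i j := fun i j => by rw [← hc]
      have e00 := e 0 0
      have e11 := e 1 1
      have e22 := e 2 2
      have e01 := e 0 1
      have e02 := e 0 2
      have e12 := e 1 2
      simp [alpha1, alpha2, alpha3, beta1, beta2, beta3, Matrix.add_apply,
        Matrix.smul_apply, Matrix.vecHead, Matrix.vecTail, Function.comp] at e00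
      simp [alpha1, alpha2, alpha3, beta1, beta2, beta3, Matrix.add_apply,
        Matrix.smul_apply, Matrix.vecHead, Matrix.vecTail, Function.comp] at e11
      simp [alpha1, alpha2, alpha3, beta1, beta2, beta3, Matrix.add_apply,
        Matrix.smul_apply, Matrix.vecHead, Matrix.vecTail, Function.comp] at e22
      simp [alpha1, alpha2, alpha3, beta1, beta2, beta3, Matrix.add_apply,
        Matrix.smul_apply, Matrix.vecHead, Matrix.vecTail, Function.comp] at e01
      simp [alpha1, alpha2, alpha3, beta1, beta2, beta3, Matrix.add_apply,
        Matrix.smul_apply, Matrix.vecHead, Matrix.vecTail, Function.comp] at e02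
      simp [alpha1, alpha2, alpha3, beta1, beta2, beta3, Matrix.add_apply,
        Matrix.smul_apply, Matrix.vecHead, Matrix.vecTail, Function.comp] at e12
      funext i
      fin_cases i <;> simp [vv0, vv1, vv2, vv3, vv4, vv5, Matrix.vecHead, Matrix.vecTail, Function.comp] <;> omega
  · have key : ∀ (M : Matrix (Fin 3) (Fin 3) ℤ), M.IsSymm →
        (∀ x : Fin 3 → ℝ, 0 ≤ dotProduct (star x) ((M.map (Int.cast : ℤ → ℝ)).mulVec x)) →
        (M.map (Int.cast : ℤ → ℝ)).PosSemidef := by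
      intro M hM hq
      refine Matrix.PosSemidef.of_dotProduct_mulVec_nonneg ?_ hq
      have : (M.map (Int.cast : ℤ → ℝ)).IsSymm := by
        rw [Matrix.IsSymm] at hM ⊢
        ext i j
        have := congrFun (congrFun hM i) j
        simp [Matrix.transpose, Matrix.map] at this ⊢
        exact_mod_cast this
      simpa [Matrix.IsHermitian, Matrix.IsSymm] using this
    refine ⟨?_, ?_, ?_, ?_, ?_, ?_⟩ <;>
    · refine key _ (by decide) (fun x => ?_)
      simp [dotProduct, Matrix.mulVec, Fin.sum_univ_three,
        alpha1, alpha2, alpha3, beta1, beta2, beta3, Matrix.vecHead, Matrix.vecTail,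
        Function.comp]
      nlinarith [sq_nonneg (x 0), sq_nonneg (x 1), sq_nonneg (x 2),
        sq_nonneg (x 0 - x 1), sq_nonneg (x 1 - x 2), sq_nonneg (x 0 - x 2)]
end

section
/- Fix g ≥ 1 and m = (m', m'') ∈ ℝ^g × ℝ^g. For τ ∈ ℍ_g and z ∈ ℂ^g, the theta series Θ_{m'm''}(τ,z) = Σ_{q∈ℤ^g} exp(2πi[(q+m')τᵗ(q+m')/2 + (q+m')ᵗ(z+m'')]) converges absolutely. -/
open Matrix Complex

/-- The term of the theta series `Θ_{m'm''}(τ,z)` indexed by `q ∈ ℤ^g`: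
`exp(2πi[(q+m')τᵗ(q+m')/2 + (q+m')ᵗ(z+m'')])`, with row-vector conventions. -/
noncomputable def thetaTerm (g : ℕ) (m' m'' : Fin g → ℝ)
    (τ : Matrix (Fin g) (Fin g) ℂ) (z : Fin g → ℂ) (q : Fin g → ℤ) : ℂ :=
  let v : Fin g → ℂ := fun i => ((q i : ℝ) + m' i : ℝ)
  Complex.exp (2 * Real.pi * Complex.I *
    ((Matrix.vecMul v τ) ⬝ᵥ v / 2 + v ⬝ᵥ (z + fun i => (m'' i : ℂ))))

open Real in
/-- Summability of the 1-dimensional Gaussian-type series `exp(-a n² + b n)` over `ℤ`. -/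
lemma theta_aux_summ1 (a b : ℝ) (ha : 0 < a) :
    Summable fun n : ℤ => rexp (-a * n ^ 2 + b * n) := by
  have h : Summable fun n : ℤ =>
      ‖jacobiTheta₂_term n ((↑(-b / (2 * π))) * I) ((↑(a / π)) * I)‖ := by
    rw [summable_norm_iff, summable_jacobiTheta₂_term_iff]
    simp [mul_I_im, div_pos ha pi_pos]
  refine h.congr fun n => ?_
  rw [norm_jacobiTheta₂_term]
  congr 1
  rw [mul_I_im, mul_I_im, ofReal_re, ofReal_re]
  have hπ : (π:ℝ) ≠ 0 := pi_ne_zero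
  field_simp
  ring

open Real in
/-- Summability of shifted Gaussian-type series with an absolute-value linear term. -/
lemma theta_aux_summ2 (a b r : ℝ) (ha : 0 < a) (hb : 0 ≤ b) :
    Summable fun n : ℤ => rexp (-a * ((n : ℝ) + r) ^ 2 + b * |(n : ℝ) + r|) := by
  have hmaj : Summable fun n : ℤ =>
      rexp (a * r ^ 2 + b * |r|) * (rexp (-(a / 2) * n ^ 2 + b * n)
        + rexp (-(a / 2) * n ^ 2 + (-b) * n)) :=
    ((theta_aux_summ1 (a / 2) b (by linarith)).add
      (theta_aux_summ1 (a / 2) (-b) (by linarith))).mul_left _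
  refine Summable.of_nonneg_of_le (fun n => (Real.exp_pos _).le) (fun n => ?_) hmaj
  have h1 : -a * ((n : ℝ) + r) ^ 2 + b * |(n : ℝ) + r|
      ≤ (a * r ^ 2 + b * |r|) + (-(a / 2) * (n : ℝ) ^ 2 + b * |(n : ℝ)|) := by
    have hsq : ((n : ℝ)) ^ 2 / 2 - r ^ 2 ≤ ((n : ℝ) + r) ^ 2 := by
      nlinarith [sq_nonneg ((n:ℝ) + 2 * r)]
    have habs : |(n : ℝ) + r| ≤ |(n : ℝ)| + |r| := abs_add_le _ _
    nlinarith [mul_le_mul_of_nonneg_left habs hb]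
  have h2 : rexp (-(a / 2) * (n : ℝ) ^ 2 + b * |(n : ℝ)|)
      ≤ rexp (-(a / 2) * n ^ 2 + b * n) + rexp (-(a / 2) * n ^ 2 + (-b) * n) := by
    rcases abs_choice ((n : ℝ)) with h | h <;> rw [h]
    · exact le_add_of_nonneg_right (Real.exp_pos _).le
    · have : b * -(n:ℝ) = (-b) * n := by ring
      rw [this]
      exact le_add_of_nonneg_left (Real.exp_pos _).le
  calc rexp (-a * ((n : ℝ) + r) ^ 2 + b * |(n : ℝ) + r|)
      ≤ rexp ((a * r ^ 2 + b * |r|) + (-(a / 2) * (n : ℝ) ^ 2 + b * |(n : ℝ)|)) :=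
        Real.exp_le_exp.2 h1
    _ = rexp (a * r ^ 2 + b * |r|) * rexp (-(a / 2) * (n : ℝ) ^ 2 + b * |(n : ℝ)|) :=
        Real.exp_add _ _
    _ ≤ _ := mul_le_mul_of_nonneg_left h2 (Real.exp_pos _).le

set_option maxHeartbeats 1000000 in
/-- Summability of products of summable nonnegative functions over `ℤ^g`. -/
lemma theta_aux_summ_pi_prod : ∀ (g : ℕ) (f : Fin g → ℤ → ℝ), (∀ i, Summable (f i)) →
    (∀ i n, 0 ≤ f i n) → Summable (fun q : Fin g → ℤ => ∏ i, f i (q i)) := by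
  intro g
  induction g with
  | zero => intro f _ _; exact .of_finite
  | succ n ih =>
    intro f hf h0
    have key : Summable (fun p : ℤ × (Fin n → ℤ) => f 0 p.1 * ∏ i, f i.succ (p.2 i)) := by
      apply Summable.mul_of_nonneg (hf 0)
        (ih _ (fun i => hf i.succ) (fun i n => h0 i.succ n)) ?_ ?_
      · exact fun n => h0 0 n
      · exact fun p => Finset.prod_nonneg fun i _ => h0 i.succ _
    rw [← (Fin.consEquiv fun _ => ℤ).summable_iff]
    refine key.congr fun p => ?_
    simp [Fin.consEquiv, Fin.prod_univ_succ]

/-- A positive definite real matrix is bounded below by a positive multiple of the identity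
quadratic form. -/
lemma theta_aux_posdef_lb {g : ℕ} {Y : Matrix (Fin g) (Fin g) ℝ} (hY : Y.PosDef) :
    ∃ c > 0, ∀ v : Fin g → ℝ, c * ∑ i, v i ^ 2 ≤ v ⬝ᵥ Y *ᵥ v := by
  by_cases hg : Nonempty (Fin g)
  · set e := WithLp.equiv 2 (Fin g → ℝ)
    set Q : EuclideanSpace ℝ (Fin g) → ℝ := fun u => (e u) ⬝ᵥ Y *ᵥ (e u) with hQ
    have hcont : Continuous Q := by
      have h1 : Continuous fun u : EuclideanSpace ℝ (Fin g) => (e u : Fin g → ℝ) :=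
        PiLp.continuous_ofLp 2 (fun _ : Fin g => ℝ)
      have h2 : Continuous fun w : Fin g → ℝ => w ⬝ᵥ Y *ᵥ w := by
        unfold dotProduct Matrix.mulVec
        simp only [dotProduct]
        fun_prop
      exact h2.comp h1
    have hsph : (Metric.sphere (0 : EuclideanSpace ℝ (Fin g)) 1).Nonempty := by
      apply NormedSpace.sphere_nonempty.mpr; norm_num
    obtain ⟨v₀, hv₀S, hmin'⟩ := (isCompact_sphere (0 : EuclideanSpace ℝ (Fin g)) 1).exists_isMinOn
      hsph hcont.continuousOn
    have hv₀ : (e v₀ : Fin g → ℝ) ≠ 0 := by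
      intro h
      have h1 : ‖v₀‖ = 1 := mem_sphere_zero_iff_norm.mp hv₀S
      have : v₀ = 0 := by simpa [e] using h
      rw [this] at h1
      simp at h1
    have hc : 0 < Q v₀ := by
      have := hY.dotProduct_mulVec_pos hv₀
      simpa using this
    refine ⟨Q v₀, hc, fun v => ?_⟩
    by_cases hv : v = 0
    · simp [hv]
    · set ve : EuclideanSpace ℝ (Fin g) := e.symm v with hve
      set r : ℝ := ‖ve‖ with hr
      have hrpos : 0 < r := by
        rw [hr, norm_pos_iff]
        intro h
        exact hv (by simpa [hve, e] using congrArg e h)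
      set w : EuclideanSpace ℝ (Fin g) := r⁻¹ • ve with hw
      have hwS : w ∈ Metric.sphere (0 : EuclideanSpace ℝ (Fin g)) 1 := by
        simp only [hw, mem_sphere_iff_norm, sub_zero, norm_smul, norm_inv, Real.norm_eq_abs,
          abs_of_pos hrpos]
        exact inv_mul_cancel₀ hrpos.ne'
      have hQw : Q v₀ ≤ Q w := hmin' hwS
      have hew : (e w : Fin g → ℝ) = r⁻¹ • v := rfl
      have hQsc : Q w = r⁻¹ * r⁻¹ * (v ⬝ᵥ Y *ᵥ v) := by
        rw [hQ]
        simp only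
        rw [hew, smul_dotProduct, mulVec_smul, dotProduct_smul]
        have hev : (e ve : Fin g → ℝ) = v := rfl
        simp [smul_eq_mul]
        ring
      have hnorm : ∑ i, v i ^ 2 = r ^ 2 := by
        have h2 : ‖ve‖ = Real.sqrt (∑ i, ‖ve i‖ ^ 2) := EuclideanSpace.norm_eq ve
        have h3 : ∀ i, (ve i : ℝ) = v i := fun i => rfl
        rw [hr, h2, Real.sq_sqrt (by positivity)]
        simp [h3, Real.norm_eq_abs, sq_abs]
      rw [hnorm]
      have h5 := mul_le_mul_of_nonneg_left hQw (by positivity : (0:ℝ) ≤ r ^ 2)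
      rw [hQsc] at h5
      calc Q v₀ * r ^ 2 = r ^ 2 * Q v₀ := by ring
        _ ≤ r ^ 2 * (r⁻¹ * r⁻¹ * (v ⬝ᵥ Y *ᵥ v)) := h5
        _ = v ⬝ᵥ Y *ᵥ v := by field_simp
  · refine ⟨1, one_pos, fun v => ?_⟩
    have : v = 0 := funext fun i => absurd ⟨i⟩ hg
    simp [this]

/-- Explicit formula for the norm of a theta series term. -/
lemma theta_aux_norm (g : ℕ) (m' m'' : Fin g → ℝ) (τ : Matrix (Fin g) (Fin g) ℂ)
    (z : Fin g → ℂ) (q : Fin g → ℤ) :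
    ‖thetaTerm g m' m'' τ z q‖ =
      Real.exp (-Real.pi * ((fun i => (q i:ℝ) + m' i) ⬝ᵥ
          (Matrix.of fun i j => (τ i j).im) *ᵥ (fun i => (q i:ℝ) + m' i))
        - 2 * Real.pi * ∑ i, ((q i:ℝ) + m' i) * (z i).im) := by
  unfold thetaTerm
  set a : Fin g → ℝ := fun i => (q i : ℝ) + m' i with ha
  set v : Fin g → ℂ := fun i => ((a i : ℝ) : ℂ) with hv
  set A : ℂ := (Matrix.vecMul v τ) ⬝ᵥ v with hA'
  set B : ℂ := v ⬝ᵥ (z + fun i => (m'' i : ℂ)) with hB'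
  rw [Complex.norm_exp]
  have h1 : (2 * (Real.pi:ℂ) * I * (A / 2 + B)) = ((2 * Real.pi : ℝ) : ℂ) * (A / 2 + B) * I := by
    push_cast; ring
  rw [h1, mul_I_re, im_ofReal_mul]
  congr 1
  have h2 : (A / 2 + B).im = A.im / 2 + B.im := by
    have h3 : A / 2 = (((2:ℝ)⁻¹ : ℝ) : ℂ) * A := by push_cast; ring
    rw [Complex.add_im, h3, im_ofReal_mul]
    ring
  have hA : A.im = a ⬝ᵥ (Matrix.of fun i j => (τ i j).im) *ᵥ a := by
    rw [hA']
    simp only [dotProduct, Matrix.vecMul, Matrix.mulVec, Complex.im_sum, hv,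
      dotProduct, Matrix.of_apply]
    have hterm : ∀ i, ((∑ x, ((a x : ℝ) : ℂ) * τ x i) * ((a i : ℝ) : ℂ)).im
        = ∑ x, a x * ((τ x i).im * a i) := by
      intro i
      rw [Complex.mul_im, Complex.ofReal_re, Complex.ofReal_im, mul_zero, zero_add,
        Complex.im_sum, Finset.sum_mul]
      refine Finset.sum_congr rfl fun x _ => ?_
      rw [Complex.im_ofReal_mul]
      ring
    rw [Finset.sum_congr rfl fun i _ => hterm i, Finset.sum_comm]
    exact Finset.sum_congr rfl fun x _ => (Finset.mul_sum _ _ _).symm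
  have hB : B.im = ∑ i, a i * (z i).im := by
    rw [hB']
    simp only [dotProduct, Complex.im_sum, hv, Pi.add_apply]
    refine Finset.sum_congr rfl fun i _ => ?_
    rw [Complex.im_ofReal_mul, Complex.add_im, Complex.ofReal_im, add_zero]
  rw [h2, hA, hB]
  ring

/-- For `τ ∈ ℍ_g` the theta series `Θ_{m'm''}(τ,z)` converges absolutely. -/
theorem theta_series_converges_absolutely (g : ℕ) (m' m'' : Fin g → ℝ)
    (τ : Matrix (Fin g) (Fin g) ℂ) (hτ : τ ∈ SiegelUpperHalfSpace g)
    (z : Fin g → ℂ) :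
    Summable (fun q : Fin g → ℤ => ‖thetaTerm g m' m'' τ z q‖) := by
  obtain ⟨-, hY⟩ := hτ
  obtain ⟨c, hc, hlb⟩ := theta_aux_posdef_lb hY
  set Y : Matrix (Fin g) (Fin g) ℝ := Matrix.of fun i j => (τ i j).im with hYdef
  set B : Fin g → ℝ := fun i => |(z i).im| with hBdef
  have hπ : (0:ℝ) < Real.pi := Real.pi_pos
  set f : Fin g → ℤ → ℝ := fun i n =>
    Real.exp (-(Real.pi * c) * ((n : ℝ) + m' i) ^ 2 + (2 * Real.pi * B i) * |(n : ℝ) + m' i|)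
    with hfdef
  have hfs : ∀ i, Summable (f i) := fun i =>
    theta_aux_summ2 _ _ _ (by positivity) (by positivity)
  have hf0 : ∀ i n, 0 ≤ f i n := fun i n => (Real.exp_pos _).le
  refine Summable.of_nonneg_of_le (fun q => norm_nonneg _) (fun q => ?_)
    (theta_aux_summ_pi_prod g f hfs hf0)
  rw [theta_aux_norm]
  set a : Fin g → ℝ := fun i => (q i : ℝ) + m' i with hadef
  rw [← Real.exp_sum]
  apply Real.exp_le_exp.2
  have hq := hlb a
  have hl : ∀ i ∈ Finset.univ, -(a i * (z i).im) ≤ |a i| * B i := by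
    intro i _
    calc -(a i * (z i).im) ≤ |a i * (z i).im| := neg_le_abs _
      _ = |a i| * B i := abs_mul _ _
  have hsum := Finset.sum_le_sum hl
  rw [Finset.sum_neg_distrib] at hsum
  have hrhs : ∑ i, (-(Real.pi * c) * a i ^ 2 + (2 * Real.pi * B i) * |a i|)
      = -(Real.pi * c) * (∑ i, a i ^ 2) + 2 * Real.pi * ∑ i, |a i| * B i := by
    simp only [Finset.mul_sum]
    rw [← Finset.sum_add_distrib]
    exact Finset.sum_congr rfl fun i _ => by ring
  rw [hrhs]
  have h1 : -Real.pi * (a ⬝ᵥ Y *ᵥ a) ≤ -(Real.pi * c) * ∑ i, a i ^ 2 := by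
    have := mul_le_mul_of_nonneg_left hq hπ.le
    nlinarith
  nlinarith [mul_le_mul_of_nonneg_left hsum (by positivity : (0:ℝ) ≤ 2 * Real.pi)]
end
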